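/- For any scalar z and n ≥ 1, the permanent of z·I_n + J equals n! · ∑_{r=0}^{n} z^r / r!; equivalently, per(z·I_n + J) = ∑_{r=0}^{n} (n!/r!) · z^r. -/

import Mathlib

/-- The permanent of a square matrix. -/
def permanent {n : ℕ} {R : Type*} [CommRing R] (A : Matrix (Fin n) (Fin n) R) : R :=
  ∑ σ : Equiv.Perm (Fin n), ∏ i, A i (σ i)

/-- The number of permutations of `Fin n` fixing a given finset `t` pointwise is `(n - #t)!`. -/
lemma card_fixing (n : ℕ) (t : Finset (Fin n)) :
    (Finset.univ.filter (fun σ : Equiv.Perm (Fin n) => ∀ i ∈ t, σ i = i)).card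
      = (n - t.card).factorial := by
  rw [← Fintype.card_subtype]
  have e1 : {σ : Equiv.Perm (Fin n) // ∀ i ∈ t, σ i = i}
      ≃ {f : Equiv.Perm (Fin n) // ∀ a, ¬(a ∉ t) → f a = a} :=
    Equiv.subtypeEquivRight (by intro f; simp [not_not])
  have e2 := (Equiv.Perm.subtypeEquivSubtypePerm (fun a : Fin n => a ∉ t)).symm
  rw [Fintype.card_congr (e1.trans e2), Fintype.card_perm, Fintype.card_subtype_compl]
  simp [Fintype.card_subtype, Fintype.card_fin]

/-- For any scalar `z` and `n ≥ 1`,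
`per (z • I + J) = ∑_{r=0}^{n} (n!/r!) · z^r`. -/
theorem permanent_smul_one_add_allOnes {R : Type*} [CommRing R] (n : ℕ) (hn : 1 ≤ n)
    (z : R) :
    permanent (z • (1 : Matrix (Fin n) (Fin n) R) + Matrix.of fun _ _ => (1 : R)) =
      ∑ r ∈ Finset.range (n + 1), ((n.factorial / r.factorial : ℕ) : R) * z ^ r := by
  unfold permanent
  simp only [Matrix.add_apply, Matrix.smul_apply, Matrix.one_apply, Matrix.of_apply,
    smul_eq_mul, mul_ite, mul_one, mul_zero]
  have hprod : ∀ σ : Equiv.Perm (Fin n),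
      (∏ i, ((if i = σ i then z else 0) + 1))
        = ∑ t : Finset (Fin n), ∏ i ∈ t, (if i = σ i then z else 0) := by
    intro σ
    rw [Fintype.prod_add]
    simp
  simp_rw [hprod]
  rw [Finset.sum_comm]
  have hinner : ∀ t : Finset (Fin n),
      (∑ σ : Equiv.Perm (Fin n), ∏ i ∈ t, (if i = σ i then z else 0))
        = ((n - t.card).factorial : R) * z ^ t.card := by
    intro t
    have : ∀ σ : Equiv.Perm (Fin n),
        (∏ i ∈ t, (if i = σ i then z else 0))
          = if (∀ i ∈ t, σ i = i) then z ^ t.card else 0 := by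
      intro σ
      by_cases h : ∀ i ∈ t, σ i = i
      · rw [if_pos h, Finset.prod_congr rfl (fun i hi => if_pos (h i hi).symm),
          Finset.prod_const]
      · rw [if_neg h]
        push_neg at h
        obtain ⟨i, hi, hne⟩ := h
        exact Finset.prod_eq_zero hi (if_neg (fun h' => hne h'.symm))
    simp_rw [this]
    rw [← Finset.sum_filter, Finset.sum_const, card_fixing, nsmul_eq_mul]
  simp_rw [hinner]
  rw [show (Finset.univ : Finset (Finset (Fin n))) = Finset.powerset Finset.univ from
    (Finset.powerset_univ).symm, Finset.powerset_card_disjiUnion]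
  erw [Finset.sum_disjiUnion]
  rw [Finset.card_univ, Fintype.card_fin]
  refine Finset.sum_congr rfl fun r hr => ?_
  have hr' : r ≤ n := Nat.lt_succ_iff.mp (Finset.mem_range.mp hr)
  have hcard : ∀ t ∈ Finset.powersetCard r (Finset.univ : Finset (Fin n)),
      ((n - t.card).factorial : R) * z ^ t.card = ((n - r).factorial : R) * z ^ r := by
    intro t ht
    rw [(Finset.mem_powersetCard.mp ht).2]
  rw [Finset.sum_congr rfl hcard, Finset.sum_const, Finset.card_powersetCard,
    Finset.card_univ, Fintype.card_fin, nsmul_eq_mul, ← mul_assoc, ← Nat.cast_mul]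
  congr 2
  rw [eq_comm, Nat.div_eq_iff_eq_mul_left (Nat.factorial_pos r)
    (Nat.factorial_dvd_factorial hr')]
  rw [← Nat.choose_mul_factorial_mul_factorial hr']
  ring
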